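/- Let A : ℂ² → ℂ² be a ℂ-linear automorphism that is diagonalizable with eigenvalues λ, μ ∈ ℂ satisfying |λ| > |μ| > 0. Suppose P ⊆ ℂ² is an ℝ-linear subspace of real dimension 2 which is NOT a ℂ-linear subspace (i.e. P is not a complex line), and suppose A(P) ⊆ P. Then both eigenvalues are real: λ ∈ ℝ and μ ∈ ℝ. -/

import Mathlib

/-- If a ℂ-linear automorphism `A` of `ℂ²`, diagonalizable with eigenvalues `λ, μ`
satisfying `|λ| > |μ| > 0`, stabilizes a real 2-dimensional ℝ-subspace `P ⊆ ℂ²` which is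
not a complex line, then both eigenvalues are real. -/
theorem stmt16 (A : (ℂ × ℂ) →ₗ[ℂ] (ℂ × ℂ)) (hbij : Function.Bijective A)
    (lam mu : ℂ) (e₁ e₂ : ℂ × ℂ)
    (hind : LinearIndependent ℂ ![e₁, e₂])
    (he₁ : A e₁ = lam • e₁) (he₂ : A e₂ = mu • e₂)
    (habs : ‖mu‖ < ‖lam‖) (hmu : 0 < ‖mu‖)
    (P : Submodule ℝ (ℂ × ℂ)) (hdim : Module.finrank ℝ P = 2)
    (hnotc : ¬ ∀ v ∈ P, Complex.I • v ∈ P)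
    (hinv : ∀ v ∈ P, A v ∈ P) :
    lam.im = 0 ∧ mu.im = 0 := by
  classical
  have hcard : Fintype.card (Fin 2) = Module.finrank ℂ (ℂ × ℂ) := by
    simp [Module.finrank_prod]
  let B := basisOfLinearIndependentOfCardEqFinrank hind hcard
  have hB : ⇑B = ![e₁, e₂] := coe_basisOfLinearIndependentOfCardEqFinrank hind hcard
  set π₁ : (ℂ × ℂ) →ₗ[ℂ] ℂ := B.coord 0 with hπ₁
  set π₂ : (ℂ × ℂ) →ₗ[ℂ] ℂ := B.coord 1 with hπ₂
  have hB0 : B 0 = e₁ := by rw [hB]; rfl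
  have hB1 : B 1 = e₂ := by rw [hB]; rfl
  have hπ₁e₁ : π₁ e₁ = 1 := by
    rw [hπ₁, ← hB0, Module.Basis.coord_apply, Module.Basis.repr_self]; simp
  have hπ₁e₂ : π₁ e₂ = 0 := by
    rw [hπ₁, ← hB1, Module.Basis.coord_apply, Module.Basis.repr_self]; simp
  have hπ₂e₁ : π₂ e₁ = 0 := by
    rw [hπ₂, ← hB0, Module.Basis.coord_apply, Module.Basis.repr_self]; simp
  have hπ₂e₂ : π₂ e₂ = 1 := by
    rw [hπ₂, ← hB1, Module.Basis.coord_apply, Module.Basis.repr_self]; simp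
  have hrepr : ∀ v : ℂ × ℂ, v = π₁ v • e₁ + π₂ v • e₂ := by
    intro v
    have := B.sum_repr v
    rw [Fin.sum_univ_two, hB0, hB1] at this
    rw [hπ₁, hπ₂]
    simpa [Module.Basis.coord_apply] using this.symm
  have hA1 : ∀ v : ℂ × ℂ, π₁ (A v) = lam * π₁ v := by
    intro v
    conv_lhs => rw [hrepr v]
    rw [map_add, map_smul, map_smul, he₁, he₂, map_add, map_smul, map_smul,
      map_smul, map_smul, hπ₁e₁, hπ₁e₂]
    simp [smul_eq_mul]; ring
  have hA2 : ∀ v : ℂ × ℂ, π₂ (A v) = mu * π₂ v := by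
    intro v
    conv_lhs => rw [hrepr v]
    rw [map_add, map_smul, map_smul, he₁, he₂, map_add, map_smul, map_smul,
      map_smul, map_smul, hπ₂e₁, hπ₂e₂]
    simp [smul_eq_mul]; ring
  have he₁ne : e₁ ≠ 0 := by
    have := hind.ne_zero 0; simpa using this
  have he₂ne : e₂ ≠ 0 := by
    have := hind.ne_zero 1; simpa using this
  -- P is not contained in either complex eigenline
  have hline : ∀ e : ℂ × ℂ, e ≠ 0 → ¬ (P ≤ (Submodule.span ℂ {e}).restrictScalars ℝ) := by
    intro e hene hle
    have hQfin : Module.finrank ℝ ((Submodule.span ℂ {e}).restrictScalars ℝ) = 2 := by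
      have h1 : Module.finrank ℂ (Submodule.span ℂ {e}) = 1 := finrank_span_singleton hene
      have h2 : Module.finrank ℝ ℂ * Module.finrank ℂ (Submodule.span ℂ {e}) =
          Module.finrank ℝ (Submodule.span ℂ {e}) := Module.finrank_mul_finrank ℝ ℂ _
      have : Module.finrank ℝ ((Submodule.span ℂ {e}).restrictScalars ℝ) =
          Module.finrank ℝ (Submodule.span ℂ {e}) := rfl
      rw [this, ← h2, h1, Complex.finrank_real_complex]
    have hPQ : P = (Submodule.span ℂ {e}).restrictScalars ℝ := by
      apply Submodule.eq_of_le_of_finrank_le hle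
      rw [hQfin, hdim]
    apply hnotc
    intro v hv
    rw [hPQ] at hv ⊢
    exact Submodule.smul_mem _ Complex.I hv
  have hx1 : ∃ u ∈ P, π₁ u ≠ 0 := by
    by_contra h
    push_neg at h
    apply hline e₂ he₂ne
    intro v hv
    have hv1 : π₁ v = 0 := h v hv
    have : v = π₂ v • e₂ := by nth_rewrite 1 [hrepr v]; rw [hv1]; simp
    rw [Submodule.restrictScalars_mem, this]
    exact Submodule.smul_mem _ _ (Submodule.mem_span_singleton_self e₂)
  have hx2 : ∃ w ∈ P, π₂ w ≠ 0 := by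
    by_contra h
    push_neg at h
    apply hline e₁ he₁ne
    intro v hv
    have hv2 : π₂ v = 0 := h v hv
    have : v = π₁ v • e₁ := by nth_rewrite 1 [hrepr v]; rw [hv2]; simp
    rw [Submodule.restrictScalars_mem, this]
    exact Submodule.smul_mem _ _ (Submodule.mem_span_singleton_self e₁)
  -- Cayley-Hamilton for the restriction of A to P
  let A' : (ℂ × ℂ) →ₗ[ℝ] (ℂ × ℂ) := A.restrictScalars ℝ
  have hinv' : ∀ v ∈ P, A' v ∈ P := hinv
  let f : P →ₗ[ℝ] P := A'.restrict hinv'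
  have hfd : f.charpoly.natDegree = 2 := by
    rw [LinearMap.charpoly_natDegree, hdim]
  set b : ℝ := f.charpoly.coeff 1 with hb
  set c : ℝ := f.charpoly.coeff 0 with hc
  have h2 : f.charpoly.coeff 2 = 1 := by
    have := f.charpoly_monic.coeff_natDegree
    rwa [hfd] at this
  have hCH : ∀ v : P, f (f v) + b • f v + c • v = 0 := by
    intro v
    have h0 : Polynomial.aeval f f.charpoly = 0 := f.aeval_self_charpoly
    rw [Polynomial.aeval_eq_sum_range, hfd] at h0
    have h0v := congrArg (fun g : P →ₗ[ℝ] P => g v) h0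
    simp only [Finset.sum_range_succ, Finset.sum_range_zero, zero_add,
      LinearMap.add_apply, LinearMap.smul_apply, LinearMap.zero_apply,
      pow_zero, pow_one, pow_two, Module.End.one_apply, Module.End.mul_apply, one_smul] at h0v
    rw [h2, one_smul] at h0v
    rw [← h0v, ← hb, ← hc]
    abel
  -- push the quadratic relation to the coordinates
  have hquad : ∀ (π : (ℂ × ℂ) →ₗ[ℂ] ℂ) (z : ℂ), (∀ v, π (A v) = z * π v) →
      ∀ u ∈ P, (z ^ 2 + (b : ℂ) * z + (c : ℂ)) * π u = 0 := by
    intro π z hπA u hu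
    have hch := hCH ⟨u, hu⟩
    have hfc : ∀ v : P, ((f v : P) : ℂ × ℂ) = A (v : ℂ × ℂ) := fun v => rfl
    have hcoe : A (A u) + b • A u + c • u = 0 := by
      have h := congrArg (fun x : P => (x : ℂ × ℂ)) hch
      simpa only [Submodule.coe_add, SetLike.val_smul, hfc, ZeroMemClass.coe_zero] using h
    have hπ0 : z * (z * π u) + (b : ℂ) * (z * π u) + (c : ℂ) * π u = 0 := by
      have h := congrArg π hcoe
      rw [map_add, map_add, map_zero, ← algebraMap_smul ℂ b (A u), ← algebraMap_smul ℂ c u,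
        map_smul, map_smul, Complex.coe_algebraMap, smul_eq_mul, smul_eq_mul,
        hπA, hπA] at h
      exact h
    linear_combination hπ0
  obtain ⟨u, hu, hu1⟩ := hx1
  obtain ⟨w, hw, hw2⟩ := hx2
  have hq1 : lam ^ 2 + (b : ℂ) * lam + (c : ℂ) = 0 :=
    mul_right_cancel₀ hu1 (by rw [hquad π₁ lam hA1 u hu]; ring)
  have hq2 : mu ^ 2 + (b : ℂ) * mu + (c : ℂ) = 0 :=
    mul_right_cancel₀ hw2 (by rw [hquad π₂ mu hA2 w hw]; ring)
  -- final algebra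
  have hne : lam ≠ mu := fun h => by rw [h] at habs; exact lt_irrefl _ habs
  have hsum : lam + mu = -(b : ℂ) := by
    have h3 : (lam - mu) * (lam + mu + (b : ℂ)) = 0 := by
      linear_combination hq1 - hq2
    rcases mul_eq_zero.mp h3 with h | h
    · exact absurd (sub_eq_zero.mp h) hne
    · exact eq_neg_of_add_eq_zero_left h
  have hprod : lam * mu = (c : ℂ) := by
    have : (b : ℂ) = -(lam + mu) := by linear_combination hsum
    rw [this] at hq1
    linear_combination -hq1
  have him1 : lam.im + mu.im = 0 := by
    have := congrArg Complex.im hsum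
    simpa using this
  have him2 : lam.re * mu.im + lam.im * mu.re = 0 := by
    have := congrArg Complex.im hprod
    simpa [Complex.mul_im] using this
  have hlim : lam.im = 0 := by
    by_contra hlim
    have hmuim : mu.im = -lam.im := by linarith
    have hre : mu.re = lam.re := by
      rw [hmuim] at him2
      have : lam.im * (mu.re - lam.re) = 0 := by ring_nf; linarith [him2]
      rcases mul_eq_zero.mp this with h | h
      · exact absurd h hlim
      · linarith [sub_eq_zero.mp h]
    have : mu = (starRingEnd ℂ) lam := by
      apply Complex.ext <;> simp [hre, hmuim]
    rw [this, Complex.norm_conj] at habs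
    exact lt_irrefl _ habs
  exact ⟨hlim, by linarith⟩
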